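/- Let à = [[0,1],[2,1]] (Thue–Morse) and G := {v ∈ ℚ² : Ãⁿ v ∈ ℤ² for some n ∈ ℕ}. There is no additive group homomorphism s : G → ℤ with s(1, −1) = 1. Equivalently, the injection ψ : ℤ → G, ψ(k) = k·(1, −1), admits no retraction, so the short exact sequence 0 → ℤ → G → G/ψ(ℤ) → 0 does not split. -/

import Mathlib

/-- Let `Ã = [[0,1],[2,1]]` (Thue–Morse) and `G = {v ∈ ℚ² : Ãⁿ v ∈ ℤ² for some n}`.
There is no additive group homomorphism `s : G → ℤ` with `s(1, −1) = 1`; i.e. the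
injection `ψ : ℤ → G`, `ψ(k) = k·(1, −1)`, admits no retraction, so the short exact
sequence `0 → ℤ → G → G/ψ(ℤ) → 0` does not split. -/
theorem stmt19 (G : AddSubgroup (Fin 2 → ℚ))
    (hG : (G : Set (Fin 2 → ℚ)) =
      {v | ∃ n : ℕ, ∀ i, ∃ z : ℤ, ((!![(0 : ℚ), 1; 2, 1]) ^ n).mulVec v i = (z : ℚ)})
    (hmem : ![(1 : ℚ), -1] ∈ G) :
    ¬ ∃ s : G →+ ℤ, s ⟨![(1 : ℚ), -1], hmem⟩ = 1 := by
  rintro ⟨s, hs⟩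
  set A : Matrix (Fin 2) (Fin 2) ℚ := !![(0 : ℚ), 1; 2, 1] with hA
  set v : ℕ → (Fin 2 → ℚ) := fun n =>
    ![(1/3) * (1/2)^n + (2/3) * (-1)^n, (2/3) * (1/2)^n - (2/3) * (-1)^n] with hv
  have hstep : ∀ n, A.mulVec (v (n+1)) = v n := by
    intro n
    funext i
    fin_cases i <;>
      simp [hA, hv, Matrix.mulVec, dotProduct, Fin.sum_univ_two, pow_succ] <;> ring
  have hAn : ∀ n, (A ^ n).mulVec (v n) = ![1, 0] := by
    intro n
    induction n with
    | zero =>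
      simp only [pow_zero, Matrix.one_mulVec]
      funext i; fin_cases i <;> norm_num [hv]
    | succ n ih =>
      rw [pow_succ, ← Matrix.mulVec_mulVec, hstep, ih]
  have hvG : ∀ n, v n ∈ G := by
    intro n
    rw [← SetLike.mem_coe, hG]
    refine ⟨n, fun i => ?_⟩
    rw [hAn n]
    fin_cases i
    · exact ⟨1, by norm_num⟩
    · exact ⟨0, by norm_num⟩
  set g : ℕ → G := fun n => ⟨v n, hvG n⟩ with hg
  set e : G := ⟨![(1 : ℚ), -1], hmem⟩ with he
  have hrel : ∀ n, (2 : ℤ) • g (n+1) = g n + ((-1 : ℤ)^(n+1) * 2) • e := by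
    intro n
    apply Subtype.ext
    push_cast [hg, he]
    funext i
    fin_cases i <;>
      simp [hv, Pi.smul_apply, pow_succ] <;> ring
  set t : ℕ → ℤ := fun n => s (g n) with ht
  have hrec : ∀ n, 2 * t (n+1) = t n + (-1 : ℤ)^(n+1) * 2 := by
    intro n
    have := congrArg s (hrel n)
    simpa [map_zsmul, map_add, ht, hs, two_mul, mul_comm] using this
  have key : ∀ n, 3 * t 0 - 2 = 2^n * (3 * t n - 2 * (-1 : ℤ)^n) := by
    intro n
    induction n with
    | zero => ring
    | succ n ih =>
      rw [ih]
      have h := hrec n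
      have : 2 ^ (n+1) * (3 * t (n+1) - 2 * (-1 : ℤ)^(n+1))
          = 2 ^ n * (3 * (2 * t (n+1)) - 4 * (-1 : ℤ)^(n+1)) := by ring
      rw [this, h]
      ring
  have hdvd : ∀ n : ℕ, (2 : ℤ)^n ∣ 3 * t 0 - 2 := fun n => ⟨_, key n⟩
  have hzero : 3 * t 0 - 2 = 0 := by
    by_contra hne
    set a : ℤ := 3 * t 0 - 2 with ha
    have h1 : (2 : ℤ)^(a.natAbs) ∣ a := hdvd _
    have h2 : (2 : ℕ)^(a.natAbs) ∣ a.natAbs := by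
      have := Int.natAbs_dvd_natAbs.mpr h1
      simpa [Int.natAbs_pow] using this
    have h3 : a.natAbs < 2 ^ a.natAbs := Nat.lt_two_pow_self
    have := Nat.eq_zero_of_dvd_of_lt h2 h3
    exact hne (Int.natAbs_eq_zero.mp this)
  omega
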